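/- For every composition α=(α_1,…,α_{2s}) of n with an even number of parts, the rank sequence r̄(α)=(r̄_0,…,r̄_n) of the circular fence poset F̄(α) is symmetric: r̄_k = r̄_{n−k} for all 0 ≤ k ≤ n. -/

import Mathlib

attribute [local instance] Classical.propDecidable

noncomputable section

/-- `α` is a composition: a nonempty list of positive integers. -/
def IsComposition (α : List ℕ) : Prop := α ≠ [] ∧ ∀ p ∈ α, 0 < p

/-- The 0-based index of the segment of the composition `α` containing edge `e`,
where edge `e` joins nodes `e` and `e+1` (nodes are 0-indexed, so node `i`
is the element `x_{i+1}` of the fence). -/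
def segIdx (α : List ℕ) (e : ℕ) : ℕ :=
  ((List.range α.length).filter fun j => decide ((α.take (j + 1)).sum ≤ e)).length

/-- Edge `e` of the fence of `α` points upwards (node `e` ⪯ node `e+1`):
edges in odd (1-based) segments point up, edges in even segments point down. -/
def upEdge (α : List ℕ) (e : ℕ) : Prop := Even (segIdx α e)

/-- The defining relations of the fence poset `F(α)` on `Fin (α.sum + 1)`:
`fenceStep α x y` holds iff `x ⪯ y` is one of the generating (cover) relations. -/
def fenceStep (α : List ℕ) (x y : Fin (α.sum + 1)) : Prop :=
  (y.val = x.val + 1 ∧ upEdge α x.val) ∨ (x.val = y.val + 1 ∧ ¬ upEdge α y.val)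

/-- The order of the fence poset `F(α)`, i.e. the partial order generated by
the defining relations. -/
def fenceLE (α : List ℕ) : Fin (α.sum + 1) → Fin (α.sum + 1) → Prop :=
  Relation.ReflTransGen (fenceStep α)

/-- Lower (order) ideals of the fence poset `F(α)`. -/
def IsFenceIdeal (α : List ℕ) (I : Finset (Fin (α.sum + 1))) : Prop :=
  ∀ x y, fenceLE α x y → y ∈ I → x ∈ I

/-- `fenceRank α k` is the number of lower ideals of `F(α)` of size `k`;
the rank sequence of `F(α)` is `fenceRank α 0, …, fenceRank α (α.sum + 1)`. -/
def fenceRank (α : List ℕ) (k : ℕ) : ℕ :=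
  Nat.card {I : Finset (Fin (α.sum + 1)) // IsFenceIdeal α I ∧ I.card = k}

/-- Defining relations of the circular fence poset `F̄(α)` on `Fin α.sum`:
as for the fence, but node `α.sum` (that is, `x_{n+1}`) is identified with node `0`. -/
def cStep (α : List ℕ) (x y : Fin α.sum) : Prop :=
  (y.val = (x.val + 1) % α.sum ∧ upEdge α x.val) ∨
  (x.val = (y.val + 1) % α.sum ∧ ¬ upEdge α y.val)

/-- The order of the circular fence poset `F̄(α)`. -/
def cLE (α : List ℕ) : Fin α.sum → Fin α.sum → Prop :=
  Relation.ReflTransGen (cStep α)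

/-- Lower (order) ideals of the circular fence poset `F̄(α)`. -/
def IsCIdeal (α : List ℕ) (I : Finset (Fin α.sum)) : Prop :=
  ∀ x y, cLE α x y → y ∈ I → x ∈ I

/-- `cRank α k` is the number of lower ideals of `F̄(α)` of size `k`;
the rank sequence of `F̄(α)` is `cRank α 0, …, cRank α α.sum`. -/
def cRank (α : List ℕ) (k : ℕ) : ℕ :=
  Nat.card {I : Finset (Fin α.sum) // IsCIdeal α I ∧ I.card = k}

/-- The sequence `a 0, …, a m` is unimodal. -/
def Unimodal (a : ℕ → ℕ) (m : ℕ) : Prop :=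
  ∃ j ≤ m, (∀ i < j, a i ≤ a (i + 1)) ∧ ∀ i, j ≤ i → i < m → a (i + 1) ≤ a i

/-- The sequence `a 0, …, a m` is bottom interlacing:
`a m ≤ a 0 ≤ a (m-1) ≤ a 1 ≤ ⋯ ≤ a ⌊m/2⌋`. -/
def BottomInterlacing (a : ℕ → ℕ) (m : ℕ) : Prop :=
  (∀ i, 2 * i ≤ m → a (m - i) ≤ a i) ∧ ∀ i, 2 * i + 1 < m → a i ≤ a (m - 1 - i)

/-- The sequence `a 0, …, a m` is top interlacing:
`a 0 ≤ a m ≤ a 1 ≤ a (m-1) ≤ ⋯ ≤ a ⌈m/2⌉`. -/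
def TopInterlacing (a : ℕ → ℕ) (m : ℕ) : Prop :=
  (∀ i, 2 * i ≤ m → a i ≤ a (m - i)) ∧ ∀ i, 2 * i + 1 < m → a (m - i) ≤ a (i + 1)

/-- The sequence `a 0, …, a m` is symmetric. -/
def SymmetricSeq (a : ℕ → ℕ) (m : ℕ) : Prop := ∀ k ≤ m, a k = a (m - k)

/-- Rowmotion for the order relation `r` on `Fin m`: `rhoRel r I` is the lower
ideal generated by the minimal elements of the complement of `I`. -/
def rhoRel {m : ℕ} (r : Fin m → Fin m → Prop) (I : Finset (Fin m)) : Finset (Fin m) :=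
  Finset.univ.filter fun x => ∃ y, y ∉ I ∧ (∀ z, r z y → z ≠ y → z ∈ I) ∧ r x y

/-- The (forward) orbit of `I` under a rowmotion map `ρ`. -/
def orbitOf {m : ℕ} (ρ : Finset (Fin m) → Finset (Fin m)) (I : Finset (Fin m)) :
    Finset (Finset (Fin m)) :=
  Finset.univ.filter fun J => ∃ k, ρ^[k] I = J

/-- The number of maximal elements of `I` viewed as a subposet of the order
with relation `r`. -/
def maxCount {m : ℕ} (r : Fin m → Fin m → Prop) (I : Finset (Fin m)) : ℕ :=
  (I.filter fun x => ∀ y ∈ I, r x y → y = x).card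

end


namespace CFP
noncomputable section
open Finset
open Finset

abbrev KK : Type := RatFunc ℚ

def qq : KK := RatFunc.X

def ind (b v u : Bool) : KK := if (b && u && !v) || (!b && v && !u) then 0 else 1

def wt (u : Bool) : KK := if u then qq else 1

def ent (b v u : Bool) : KK := ind b v u * wt u

def Mm (b : Bool) : Matrix Bool Bool KK := Matrix.of fun v u => ent b v u

def Wm (m : ℕ) (p : Fin m → Bool) : Matrix Bool Bool KK :=
  (List.ofFn fun i => Mm (p i)).prod

lemma Wm_zero (p : Fin 0 → Bool) : Wm 0 p = 1 := by simp [Wm]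

lemma Wm_succ (m : ℕ) (p : Fin (m+1) → Bool) :
    Wm (m+1) p = Mm (p 0) * Wm m (p ∘ Fin.succ) := by
  simp [Wm, List.ofFn_succ]

lemma ind_not (b v u : Bool) : ind (!b) (!v) (!u) = ind b v u := by
  cases b <;> cases v <;> cases u <;> rfl

def Sm : Matrix Bool Bool KK := Matrix.of fun v u =>
  match v, u with
  | false, false => 1 - qq
  | false, true => qq
  | true, false => 1
  | true, true => qq - 1

lemma S_inter (b : Bool) : Sm * Mm b = Mm (!b) * Sm := by
  ext v u
  cases b <;> cases v <;> cases u <;>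
    simp [Matrix.mul_apply, Fintype.sum_bool, Sm, Mm, ent, ind, wt] <;> ring

lemma S_W (m : ℕ) (p : Fin m → Bool) :
    Sm * Wm m p = Wm m (fun i => !(p i)) * Sm := by
  induction m with
  | zero => simp [Wm_zero]
  | succ m ih =>
      rw [Wm_succ, Wm_succ, ← mul_assoc, S_inter, mul_assoc, ih (p ∘ Fin.succ),
        ← mul_assoc]
      rfl

def cc : KK := -(qq^2 - qq + 1)

lemma qq_eq : qq = algebraMap (Polynomial ℚ) KK Polynomial.X := RatFunc.algebraMap_X.symm

lemma poly_ne : (Polynomial.X^2 - Polynomial.X + 1 : Polynomial ℚ) ≠ 0 := by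
  intro h; have := congrArg (Polynomial.eval 0) h; simp at this

lemma cc_ne : cc ≠ 0 := by
  simp only [cc, neg_ne_zero]
  have h : qq^2 - qq + 1 = algebraMap (Polynomial ℚ) KK (Polynomial.X^2 - Polynomial.X + 1) := by
    rw [map_add, map_sub, map_pow, map_one, ← qq_eq]
  rw [h]
  exact fun hz => poly_ne ((map_eq_zero_iff _ (RatFunc.algebraMap_injective ℚ)).mp hz)

def Tm : Matrix Bool Bool KK := Matrix.of fun v u =>
  cc⁻¹ * match v, u with
  | false, false => qq - 1
  | false, true => -qq
  | true, false => -1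
  | true, true => 1 - qq

lemma cc_ne' : -1 + (qq - qq^2) ≠ 0 := by
  intro hz; apply cc_ne; rw [cc]; linear_combination hz

lemma S_mul_T : Sm * Tm = 1 := by
  ext v u
  have h := cc_ne
  cases v <;> cases u <;>
    simp [Matrix.mul_apply, Fintype.sum_bool, Sm, Tm, Matrix.one_apply] <;>
    field_simp <;> rw [cc] <;> ring

lemma T_mul_S : Tm * Sm = 1 := by
  ext v u
  have h := cc_ne
  cases v <;> cases u <;>
    simp [Matrix.mul_apply, Fintype.sum_bool, Sm, Tm, Matrix.one_apply] <;>
    field_simp <;> rw [cc] <;> ring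

lemma trace_flip (m : ℕ) (p : Fin m → Bool) :
    Matrix.trace (Wm m fun i => !(p i)) = Matrix.trace (Wm m p) := by
  have h1 : Wm m (fun i => !(p i)) = Sm * (Wm m p * Tm) := by
    rw [← mul_assoc, S_W, mul_assoc, S_mul_T, mul_one]
  rw [h1, Matrix.trace_mul_comm, mul_assoc, T_mul_S, mul_one]

/-- the sum over path-configurations with fixed endpoints -/
def pSum (m : ℕ) (p : Fin m → Bool) (v w : Bool) : KK :=
  ∑ g : Fin (m+1) → Bool,
    if g 0 = v ∧ g (Fin.last m) = w then
      ∏ i : Fin m, ent (p i) (g i.castSucc) (g i.succ)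
    else 0

lemma Wm_apply (m : ℕ) (p : Fin m → Bool) (v w : Bool) :
    Wm m p v w = pSum m p v w := by
  induction m generalizing v w with
  | zero =>
      rw [Wm_zero, pSum]
      have heq := Fintype.sum_equiv (Equiv.funUnique (Fin 1) Bool).symm
        (fun u : Bool => if u = v ∧ u = w then (1:KK) else 0)
        (fun g : Fin 1 → Bool => if g 0 = v ∧ g (Fin.last 0) = w then
          ∏ i : Fin 0, ent (p i) (g i.castSucc) (g i.succ) else 0)
        (fun u => by simp)
      rw [← heq, Fintype.sum_bool]
      cases v <;> cases w <;> simp [Matrix.one_apply]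
  | succ m ih =>
      have hmul : Wm (m+1) p v w
          = ∑ u : Bool, ent (p 0) v u * pSum m (p ∘ Fin.succ) u w := by
        rw [Wm_succ, Matrix.mul_apply]
        exact Finset.sum_congr rfl fun u _ => by rw [ih]; rfl
      have heq : pSum (m+1) p v w
          = ∑ x : Bool × (Fin (m+1) → Bool),
              if x.1 = v ∧ x.2 (Fin.last m) = w then
                ent (p 0) x.1 (x.2 0) *
                  ∏ i : Fin m, ent (p i.succ) (x.2 i.castSucc) (x.2 i.succ)
              else 0 := by
        rw [pSum]
        refine (Fintype.sum_equiv (Fin.consEquiv fun _ : Fin (m+2) => Bool) _ _ ?_).symm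
        rintro ⟨u, g⟩
        set g' : Fin (m+2) → Bool := Fin.cons u g with hg'
        have hc : (Fin.consEquiv fun _ : Fin (m+2) => Bool) (u, g) = g' := rfl
        rw [hc]
        have hsucc : ∀ j : Fin (m+1), g' j.succ = g j := fun j => Fin.cons_succ _ _ _
        have h1 : g' (0 : Fin (m+2)) = u := rfl
        have h2 : g' (Fin.last (m+1)) = g (Fin.last m) := by
          rw [← Fin.succ_last]; exact hsucc _
        have h3 : ∏ i : Fin (m+1), ent (p i) (g' i.castSucc) (g' i.succ)
            = ent (p 0) u (g 0) * ∏ i : Fin m, ent (p i.succ) (g i.castSucc) (g i.succ) := by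
          rw [Fin.prod_univ_succ, Fin.castSucc_zero, h1, hsucc]
          have : ∀ i : Fin m, ent (p i.succ) (g' i.succ.castSucc) (g' i.succ.succ)
              = ent (p i.succ) (g i.castSucc) (g i.succ) := fun i => by
            rw [← Fin.succ_castSucc, hsucc, hsucc]
          simp only [this]
        rw [h1, h2, h3]
      rw [hmul, heq, Fintype.sum_prod_type]
      simp only [pSum, Finset.mul_sum]
      rw [Finset.sum_comm]
      conv_rhs => rw [Finset.sum_comm]
      refine Finset.sum_congr rfl fun g _ => ?_
      rw [Fintype.sum_bool, Fintype.sum_bool]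
      by_cases hw : g (Fin.last m) = w <;> cases hv0 : g 0 <;> cases v <;>
        simp [hw, hv0, ent, Function.comp]

def circTerm (n : ℕ) [NeZero n] (p f : Fin n → Bool) : KK :=
  ∏ i : Fin n, ent (p i) (f i) (f (i + 1))

def circSum (n : ℕ) [NeZero n] (p : Fin n → Bool) : KK := ∑ f : Fin n → Bool, circTerm n p f

lemma fin_add_one_val {n : ℕ} [NeZero n] (i : Fin n) :
    (i + 1).val = (i.val + 1) % n := by
  have h : (i + 1).val = (i.val + (1 : Fin n).val) % n := rfl
  rw [h, Fin.val_one']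
  conv_rhs => rw [Nat.add_mod, Nat.mod_eq_of_lt i.isLt]

lemma trace_eq_circSum (n : ℕ) [NeZero n] (p : Fin n → Bool) :
    Matrix.trace (Wm n p) = circSum n p := by
  have hn : 0 < n := Nat.pos_of_ne_zero (NeZero.ne n)
  have htr : Matrix.trace (Wm n p) = ∑ v : Bool, pSum n p v v := by
    rw [Matrix.trace]
    exact Finset.sum_congr rfl fun v _ => by rw [Matrix.diag, Wm_apply]
  rw [htr]
  simp only [pSum]
  rw [Finset.sum_comm]
  have hstep : ∀ g : Fin (n+1) → Bool,
      (∑ v : Bool, if g 0 = v ∧ g (Fin.last n) = v then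
        ∏ i : Fin n, ent (p i) (g i.castSucc) (g i.succ) else 0)
      = if g 0 = g (Fin.last n) then
          ∏ i : Fin n, ent (p i) (g i.castSucc) (g i.succ) else 0 := by
    intro g
    rw [Fintype.sum_bool]
    cases h0 : g 0 <;> cases hl : g (Fin.last n) <;> simp [h0, hl]
  rw [Finset.sum_congr rfl fun g _ => hstep g]
  rw [← Finset.sum_filter]
  refine Finset.sum_nbij' (fun g => fun i : Fin n => g i.castSucc)
    (fun f => fun j : Fin (n+1) => f ⟨j.val % n, Nat.mod_lt _ hn⟩) ?_ ?_ ?_ ?_ ?_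
  · intro g hg; exact Finset.mem_univ _
  · intro f hf
    simp only [Finset.mem_filter, Finset.mem_univ, true_and]
    try dsimp only
    congr 1
    apply Fin.ext
    simp [Fin.last]
  · intro g hg
    simp only [Finset.mem_filter, Finset.mem_univ, true_and] at hg
    funext j
    try dsimp only
    rcases Nat.lt_or_ge j.val n with hj | hj
    · have h2 : (⟨j.val % n, Nat.mod_lt _ hn⟩ : Fin n).castSucc = j := by
        apply Fin.ext; simp [Nat.mod_eq_of_lt hj]
      rw [h2]
    · have hjn : j.val = n := le_antisymm (Nat.lt_succ_iff.mp j.isLt) hj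
      have hj1 : j = Fin.last n := Fin.ext hjn
      have h2 : (⟨j.val % n, Nat.mod_lt _ hn⟩ : Fin n).castSucc = 0 := by
        apply Fin.ext; simp [hjn]
      rw [h2, hj1, ← hg]
  · intro f hf
    funext i
    try dsimp only
    congr 1
    apply Fin.ext
    simp [Nat.mod_eq_of_lt i.isLt]
  · intro g hg
    simp only [Finset.mem_filter, Finset.mem_univ, true_and] at hg
    rw [circTerm]
    refine Finset.prod_congr rfl fun i _ => ?_
    try dsimp only
    congr 1
    rcases Nat.lt_or_ge (i.val + 1) n with hi | hi
    · congr 1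
      apply Fin.ext
      simp [fin_add_one_val, Nat.mod_eq_of_lt hi]
    · have hin : i.val + 1 = n := by omega
      have h1 : i.succ = Fin.last n := Fin.ext (by simp [hin])
      have h2 : ((i + 1 : Fin n)).castSucc = 0 := by
        apply Fin.ext; simp [fin_add_one_val, hin]
      rw [h1, h2, hg]

def alw (b v u : Bool) : Bool := !((b && u && !v) || (!b && v && !u))

lemma ind_eq (b v u : Bool) : ind b v u = if alw b v u = true then 1 else 0 := by
  cases b <;> cases v <;> cases u <;> simp [ind, alw]

def Valid (n : ℕ) [NeZero n] (p f : Fin n → Bool) : Prop :=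
  ∀ i : Fin n, alw (p i) (f i) (f (i+1)) = true

def cnt (n : ℕ) (f : Fin n → Bool) : ℕ := (Finset.univ.filter fun i => f i = true).card

lemma circTerm_eq (n : ℕ) [NeZero n] (p f : Fin n → Bool) :
    circTerm n p f = if Valid n p f then qq ^ cnt n f else 0 := by
  classical
  rw [circTerm]
  have h1 : ∀ i : Fin n, ent (p i) (f i) (f (i+1))
      = (if alw (p i) (f i) (f (i+1)) = true then 1 else 0) * wt (f (i+1)) := fun i => by
    rw [ent, ind_eq]
  simp only [h1]
  rw [Finset.prod_mul_distrib, Finset.prod_boole]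
  have hperm : ∏ i : Fin n, wt (f (i+1)) = ∏ i : Fin n, wt (f i) :=
    Fintype.prod_equiv (Equiv.addRight 1) _ _ (fun i => rfl)
  rw [hperm]
  have hw : ∏ i : Fin n, wt (f i) = qq ^ cnt n f := by
    rw [← Finset.prod_filter_mul_prod_filter_not Finset.univ (fun i => f i = true)]
    have ha : ∏ i ∈ Finset.univ.filter (fun i => f i = true), wt (f i) = qq ^ cnt n f := by
      have ha' : ∏ i ∈ Finset.univ.filter (fun i => f i = true), wt (f i)
          = ∏ _i ∈ Finset.univ.filter (fun i => f i = true), qq :=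
        Finset.prod_congr rfl (fun i hi => by
          simp only [Finset.mem_filter] at hi
          rw [wt, if_pos hi.2])
      rw [ha', Finset.prod_const, cnt]
    have hb : ∏ i ∈ Finset.univ.filter (fun i => ¬(f i = true)), wt (f i) = 1 := by
      refine Finset.prod_eq_one fun i hi => ?_
      simp only [Finset.mem_filter] at hi
      rw [wt, if_neg hi.2]
    rw [ha, hb, mul_one]
  rw [hw]
  by_cases h : Valid n p f
  · rw [if_pos h, if_pos, one_mul]
    intro i _; exact h i
  · rw [if_neg h, if_neg, zero_mul]
    intro hc; exact h fun i => hc i (Finset.mem_univ i)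

lemma alw_not (b v u : Bool) : alw (!b) (!v) (!u) = alw b v u := by
  cases b <;> cases v <;> cases u <;> rfl

lemma valid_not (n : ℕ) [NeZero n] (p f : Fin n → Bool) :
    Valid n (fun i => !(p i)) (fun i => !(f i)) ↔ Valid n p f :=
  forall_congr' fun i => by rw [alw_not]

lemma cnt_le (n : ℕ) (f : Fin n → Bool) : cnt n f ≤ n := by
  have := Finset.card_filter_le (Finset.univ : Finset (Fin n)) (fun i => f i = true)
  simpa [cnt] using this

lemma cnt_not (n : ℕ) (f : Fin n → Bool) : cnt n (fun i => !(f i)) = n - cnt n f := by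
  classical
  rw [cnt, cnt]
  have h : (Finset.univ.filter fun i => (!(f i)) = true)
      = Finset.univ.filter fun i => ¬(f i = true) := by
    ext i; simp
  rw [h, Finset.filter_not, Finset.card_sdiff_of_subset (Finset.filter_subset _ _)]
  simp

def negE (n : ℕ) : (Fin n → Bool) ≃ (Fin n → Bool) :=
  Function.Involutive.toPerm (fun f => fun i => !(f i)) (fun f => by funext i; simp)

lemma key (n : ℕ) [NeZero n] (p : Fin n → Bool) :
    (∑ f : Fin n → Bool, if Valid n p f then ((Polynomial.X : Polynomial ℚ)) ^ cnt n f else 0)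
    = ∑ f : Fin n → Bool, if Valid n p f then (Polynomial.X : Polynomial ℚ) ^ (n - cnt n f) else 0 := by
  classical
  apply RatFunc.algebraMap_injective ℚ
  rw [map_sum, map_sum]
  simp only [apply_ite (algebraMap (Polynomial ℚ) KK), map_pow, map_zero, ← qq_eq]
  have h1 : (∑ f : Fin n → Bool, if Valid n p f then qq ^ cnt n f else 0) = circSum n p := by
    rw [circSum]
    exact (Finset.sum_congr rfl fun f _ => (circTerm_eq n p f)).symm
  have h2 : (∑ f : Fin n → Bool, if Valid n p f then qq ^ (n - cnt n f) else 0)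
      = circSum n (fun i => !(p i)) := by
    rw [circSum]
    rw [Fintype.sum_equiv (negE n)
      (fun f => if Valid n p f then qq ^ (n - cnt n f) else 0)
      (fun f => circTerm n (fun i => !(p i)) f)
      (fun f => ?_)]
    rw [circTerm_eq]
    have hv : Valid n (fun i => !(p i)) ((negE n) f) ↔ Valid n p f := by
      have := valid_not n p f
      exact this
    have hc : cnt n ((negE n) f) = n - cnt n f := cnt_not n f
    rw [hc]
    by_cases h : Valid n p f
    · rw [if_pos h, if_pos (hv.mpr h)]
    · rw [if_neg h, if_neg (fun hh => h (hv.mp hh))]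
  rw [h1, h2, ← trace_eq_circSum, ← trace_eq_circSum, trace_flip]

lemma alw_true_iff (b v u : Bool) :
    alw b v u = true ↔ ((b = true → u = true → v = true) ∧ (b = false → v = true → u = true)) := by
  cases b <;> cases v <;> cases u <;> simp [alw]

def NN (n : ℕ) [NeZero n] (p : Fin n → Bool) (k : ℕ) : ℕ :=
  (Finset.univ.filter fun f : Fin n → Bool => Valid n p f ∧ cnt n f = k).card

lemma NN_symm (n : ℕ) [NeZero n] (p : Fin n → Bool) (k : ℕ) (hk : k ≤ n) :
    NN n p k = NN n p (n - k) := by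
  have hkey := key n p
  have hco := congrArg (fun P => Polynomial.coeff P k) hkey
  simp only [Polynomial.finset_sum_coeff] at hco
  have e1 : ∀ f : Fin n → Bool,
      (if Valid n p f then ((Polynomial.X : Polynomial ℚ)) ^ cnt n f else 0).coeff k
      = if Valid n p f ∧ cnt n f = k then (1:ℚ) else 0 := by
    intro f
    by_cases h : Valid n p f
    · rw [if_pos h, Polynomial.coeff_X_pow]
      by_cases h2 : cnt n f = k
      · rw [if_pos (by omega), if_pos ⟨h, h2⟩]
      · rw [if_neg (by omega), if_neg (by tauto)]
    · rw [if_neg h, Polynomial.coeff_zero, if_neg (by tauto)]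
  have e2 : ∀ f : Fin n → Bool,
      (if Valid n p f then ((Polynomial.X : Polynomial ℚ)) ^ (n - cnt n f) else 0).coeff k
      = if Valid n p f ∧ cnt n f = n - k then (1:ℚ) else 0 := by
    intro f
    have hle := cnt_le n f
    by_cases h : Valid n p f
    · rw [if_pos h, Polynomial.coeff_X_pow]
      by_cases h2 : cnt n f = n - k
      · rw [if_pos (by omega), if_pos ⟨h, h2⟩]
      · rw [if_neg (by omega), if_neg (by tauto)]
    · rw [if_neg h, Polynomial.coeff_zero, if_neg (by tauto)]
  rw [Finset.sum_congr rfl (fun f _ => e1 f), Finset.sum_congr rfl (fun f _ => e2 f)] at hco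
  have hc1 : ((NN n p k : ℚ)) = ∑ f : Fin n → Bool,
      if Valid n p f ∧ cnt n f = k then (1:ℚ) else 0 := by
    rw [NN, Finset.card_filter]
    push_cast
    exact Finset.sum_congr rfl fun f _ => by split <;> simp
  have hc2 : ((NN n p (n - k) : ℚ)) = ∑ f : Fin n → Bool,
      if Valid n p f ∧ cnt n f = n - k then (1:ℚ) else 0 := by
    rw [NN, Finset.card_filter]
    push_cast
    exact Finset.sum_congr rfl fun f _ => by split <;> simp
  have : ((NN n p k : ℚ)) = ((NN n p (n - k) : ℚ)) := by rw [hc1, hc2, hco]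
  exact_mod_cast this


lemma ideal_iff (α : List ℕ) [NeZero α.sum] (I : Finset (Fin α.sum)) :
    IsCIdeal α I ↔ Valid α.sum (fun i => decide (upEdge α i.val)) (fun i => decide (i ∈ I)) := by
  simp only [Valid]
  constructor
  · intro h i
    rw [alw_true_iff]
    constructor
    · intro hb hu
      have hup : upEdge α i.val := of_decide_eq_true hb
      have hmem : (i+1) ∈ I := of_decide_eq_true hu
      have hstep : cStep α i (i+1) := Or.inl ⟨fin_add_one_val i, hup⟩
      exact decide_eq_true (h i (i+1) (Relation.ReflTransGen.single hstep) hmem)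
    · intro hb hv
      have hdown : ¬ upEdge α i.val := of_decide_eq_false hb
      have hmem : i ∈ I := of_decide_eq_true hv
      have hstep : cStep α (i+1) i := Or.inr ⟨fin_add_one_val i, hdown⟩
      exact decide_eq_true (h (i+1) i (Relation.ReflTransGen.single hstep) hmem)
  · intro h x y hle hy
    induction hle using Relation.ReflTransGen.head_induction_on with
    | refl => exact hy
    | head hstep _ ih =>
        rename_i a c _
        rcases hstep with ⟨h1, h2⟩ | ⟨h1, h2⟩
        · have hc : c = a + 1 := Fin.ext (by rw [h1, fin_add_one_val])
          have := ((alw_true_iff _ _ _).mp (h a)).1 (decide_eq_true h2)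
            (by rw [← hc]; exact decide_eq_true ih)
          exact of_decide_eq_true this
        · have ha : a = c + 1 := Fin.ext (by rw [h1, fin_add_one_val])
          have hb : decide (upEdge α c.val) = false := decide_eq_false h2
          have := ((alw_true_iff _ _ _).mp (h c)).2 hb (decide_eq_true ih)
          rw [ha]; exact of_decide_eq_true this

lemma cnt_decide (α : List ℕ) (I : Finset (Fin α.sum)) :
    cnt α.sum (fun i => decide (i ∈ I)) = I.card := by
  rw [cnt]; congr 1; ext i; simp

lemma cRank_eq (α : List ℕ) [NeZero α.sum] (k : ℕ) :
    cRank α k = NN α.sum (fun i => decide (upEdge α i.val)) k := by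
  have e : {I : Finset (Fin α.sum) // IsCIdeal α I ∧ I.card = k}
      ≃ {f : Fin α.sum → Bool //
          Valid α.sum (fun i => decide (upEdge α i.val)) f ∧ cnt α.sum f = k} :=
    { toFun := fun x => ⟨fun i => decide (i ∈ x.1),
        ⟨(ideal_iff α x.1).mp x.2.1, by rw [cnt_decide]; exact x.2.2⟩⟩
      invFun := fun x => ⟨Finset.univ.filter (fun i => x.1 i = true), by
        have hff : (fun i => decide (i ∈ Finset.univ.filter (fun j => x.1 j = true))) = x.1 := by
          funext i; simp
        refine ⟨(ideal_iff α _).mpr ?_, ?_⟩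
        · rw [hff]; exact x.2.1
        · have h2 : cnt α.sum x.1
              = (Finset.univ.filter (fun i => x.1 i = true)).card := rfl
          rw [← h2]; exact x.2.2⟩
      left_inv := fun x => Subtype.ext (by ext i; simp)
      right_inv := fun x => Subtype.ext (by funext i; simp) }
  rw [cRank, Nat.card_congr e, Nat.card_eq_fintype_card, Fintype.card_subtype, NN]

end
end CFP

/-- For every composition `α` of `n` with an even number of parts, the
rank sequence of the circular fence poset `F̄(α)` is symmetric. -/
theorem circular_rank_symmetric (α : List ℕ) (hα : IsComposition α)
    (heven : Even α.length) :
    ∀ k ≤ α.sum, cRank α k = cRank α (α.sum - k) := by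
  intro k hk
  rcases Nat.eq_zero_or_pos α.sum with h0 | hpos
  · have hk0 : k = 0 := by omega
    subst hk0
    rw [Nat.sub_zero, h0]
  · haveI : NeZero α.sum := ⟨hpos.ne'⟩
    rw [CFP.cRank_eq, CFP.cRank_eq, CFP.NN_symm _ _ k hk]
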